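/- Let p ≥ 1 and let G₁ and G₂ be symmetric positive definite p×p real matrices. Let g₁ ≤ g₂ ≤ … ≤ g_p be the eigenvalues of G₂ (with multiplicity) listed in increasing order and let κ₁ ≥ κ₂ ≥ … ≥ κ_p be the eigenvalues of G₂^{1/2}G₁⁻¹G₂^{1/2} (with multiplicity) listed in decreasing order, where G₂^{1/2} is the symmetric positive definite square root of G₂. Then for every λ ≥ 0, trace((G₂ + λG₁)⁻²G₂) ≤ Σ_{r=1}^{p} κ_r² / (g_r (κ_r + λ)²). -/

import Mathlib

open Matrix Polynomial

lemma exists_comp_perm_eq : ∀ {n : ℕ} {α : Type*} [DecidableEq α] (f g : Fin n → α),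
    Multiset.map f Finset.univ.val = Multiset.map g Finset.univ.val →
    ∃ σ : Equiv.Perm (Fin n), g ∘ σ = f := by
  intro n
  induction n with
  | zero => exact fun f g h => ⟨1, funext fun i => i.elim0⟩
  | succ n ih =>
    intro α _ f g h
    have h0 : f 0 ∈ Multiset.map g Finset.univ.val := by
      rw [← h]; exact Multiset.mem_map_of_mem f (by rw [Finset.mem_val]; exact Finset.mem_univ 0)
    obtain ⟨j, -, hj⟩ := Multiset.mem_map.1 h0
    set τ : Equiv.Perm (Fin (n+1)) := Equiv.swap 0 j with hτ
    have hτuniv : Multiset.map (⇑τ) Finset.univ.val = Finset.univ.val := by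
      have := Finset.map_univ_equiv τ
      simpa [Finset.map_val] using congrArg Finset.val this
    have hg' : Multiset.map (g ∘ ⇑τ) Finset.univ.val = Multiset.map f Finset.univ.val := by
      rw [← Multiset.map_map, hτuniv, h]
    have huniv : (Finset.univ.val : Multiset (Fin (n+1)))
        = 0 ::ₘ Multiset.map Fin.succ Finset.univ.val := by
      rw [Fin.univ_succ, Finset.cons_val, Finset.map_val]; rfl
    rw [huniv] at hg'
    simp only [Multiset.map_cons, Multiset.map_map] at hg'
    have hg'0 : (g ∘ ⇑τ) 0 = f 0 := by simp [hτ, hj]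
    rw [hg'0] at hg'
    have htail := (Multiset.cons_inj_right _).1 hg'
    obtain ⟨σ', hσ'⟩ := ih (f ∘ Fin.succ) ((g ∘ ⇑τ) ∘ Fin.succ) htail.symm
    refine ⟨(Equiv.Perm.decomposeFin.symm (0, σ')).trans τ, funext fun i => ?_⟩
    induction i using Fin.cases with
    | zero => simpa [hτ] using hj
    | succ i =>
      have : (Equiv.Perm.decomposeFin.symm (0, σ')) i.succ = (σ' i).succ := by
        simp [Equiv.Perm.decomposeFin_symm_apply_succ]
      simp only [Function.comp, Equiv.trans_apply, this]
      exact congrFun hσ' i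

lemma charpoly_conj {p : ℕ} (U V B : Matrix (Fin p) (Fin p) ℝ) (hUV : U * V = 1)
    (hVU : V * U = 1) : (U * B * V).charpoly = B.charpoly := by
  set F : Matrix (Fin p) (Fin p) ℝ →+* Matrix (Fin p) (Fin p) ℝ[X] :=
    (C : ℝ →+* ℝ[X]).mapMatrix with hF
  have hone : F U * F V = 1 := by rw [← _root_.map_mul F, hUV, _root_.map_one F]
  have key : charmatrix (U * B * V) = F U * charmatrix B * F V := by
    rw [charmatrix, charmatrix, mul_sub, sub_mul, ← hF]
    congr 1
    · rw [← (scalar_commute (X : ℝ[X]) (fun r' => Commute.all _ _) (F U)).eq, mul_assoc, hone,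
        mul_one]
    · rw [← _root_.map_mul F, ← _root_.map_mul F]
  rw [Matrix.charpoly, key, det_mul, det_mul, Matrix.charpoly, mul_comm (det (F U)), mul_assoc,
    ← det_mul, hone, det_one, mul_one]

lemma diag_charpoly {p : ℕ} (d : Fin p → ℝ) :
    (diagonal d).charpoly = ∏ r : Fin p, (X - C (d r)) := by
  rw [charpoly_of_upperTriangular _ (blockTriangular_diagonal d)]
  simp

lemma roots_prod_fun {p : ℕ} (f : Fin p → ℝ) :
    (∏ r : Fin p, ((X : ℝ[X]) - C (f r))).roots = Multiset.map f Finset.univ.val := by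
  have : (∏ r : Fin p, ((X : ℝ[X]) - C (f r)))
      = (Multiset.map (fun b => (X : ℝ[X]) - C b) (Multiset.map f Finset.univ.val)).prod := by
    rw [Multiset.map_map, Finset.prod_eq_multiset_prod]; rfl
  rw [this, roots_multiset_prod_X_sub_C]

lemma entry_conj_diag {p : ℕ} (W : Matrix (Fin p) (Fin p) ℝ) (d : Fin p → ℝ) (i j : Fin p) :
    (W * diagonal d * Wᵀ) i j = ∑ k, W i k * d k * W j k := by
  rw [Matrix.mul_apply]
  simp [Matrix.mul_diagonal]

/-- spectral decomposition with prescribed eigenvalue tuple -/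
lemma spectral_of_charpoly {p : ℕ} (A : Matrix (Fin p) (Fin p) ℝ) (hA : A.PosDef)
    (a : Fin p → ℝ) (h : A.charpoly = ∏ r : Fin p, (X - C (a r))) :
    ∃ U : Matrix (Fin p) (Fin p) ℝ, Uᵀ * U = 1 ∧ U * Uᵀ = 1 ∧
      A = U * diagonal a * Uᵀ ∧ ∀ r, 0 < a r := by
  have hH : A.IsHermitian := hA.isHermitian
  set V : Matrix (Fin p) (Fin p) ℝ := (hH.eigenvectorUnitary : Matrix (Fin p) (Fin p) ℝ) with hV
  have hV1 : Vᵀ * V = 1 := by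
    have := (Matrix.mem_unitaryGroup_iff').mp hH.eigenvectorUnitary.2
    simpa [star_eq_conjTranspose] using this
  have hV2 : V * Vᵀ = 1 := by
    have := (Matrix.mem_unitaryGroup_iff).mp hH.eigenvectorUnitary.2
    simpa [star_eq_conjTranspose] using this
  have hdecomp : A = V * diagonal hH.eigenvalues * Vᵀ := by
    have := hH.spectral_theorem
    simpa [star_eq_conjTranspose] using this
  have h2 : A.charpoly = ∏ r : Fin p, (X - C (hH.eigenvalues r)) := by
    conv_lhs => rw [hdecomp]
    rw [charpoly_conj _ _ _ hV2 hV1, diag_charpoly]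
  have hcp : (∏ r : Fin p, ((X : ℝ[X]) - C (hH.eigenvalues r))) = ∏ r : Fin p, (X - C (a r)) :=
    h2.symm.trans h
  have hmult : Multiset.map hH.eigenvalues Finset.univ.val = Multiset.map a Finset.univ.val := by
    rw [← roots_prod_fun, ← roots_prod_fun, hcp]
  obtain ⟨σ, hσ⟩ := exists_comp_perm_eq a hH.eigenvalues hmult.symm
  refine ⟨V.submatrix id σ, ?_, ?_, ?_, fun r => ?_⟩
  · ext k l
    have : (Vᵀ * V) (σ k) (σ l) = (1 : Matrix (Fin p) (Fin p) ℝ) (σ k) (σ l) := by rw [hV1]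
    simpa [Matrix.mul_apply, Matrix.one_apply, EmbeddingLike.apply_eq_iff_eq] using this
  · ext i j
    have h12 : (V * Vᵀ) i j = (1 : Matrix (Fin p) (Fin p) ℝ) i j := by rw [hV2]
    simp only [Matrix.mul_apply, transpose_apply, submatrix_apply, id] at h12 ⊢
    rw [← Equiv.sum_comp σ (fun k => V i k * V j k)] at h12
    exact h12
  · rw [hdecomp]
    ext i j
    rw [entry_conj_diag, entry_conj_diag]
    rw [← Equiv.sum_comp σ (fun k => V i k * hH.eigenvalues k * V j k)]
    exact Finset.sum_congr rfl fun k _ => by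
      simp [submatrix_apply, ← congrFun hσ k]
  · rw [← congrFun hσ r]; exact hA.eigenvalues_pos (σ r)

lemma vonNeumann_trace_le {p : ℕ} (x y : Fin p → ℝ) (hx : Antitone x) (hy : Antitone y)
    (V U : Matrix (Fin p) (Fin p) ℝ)
    (hV1 : Vᵀ * V = 1) (hV2 : V * Vᵀ = 1) (hU1 : Uᵀ * U = 1) (hU2 : U * Uᵀ = 1) :
    Matrix.trace (V * diagonal x * Vᵀ * (U * diagonal y * Uᵀ)) ≤ ∑ r, x r * y r := by
  set M := Vᵀ * U with hM
  have hM2 : M * Mᵀ = 1 := by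
    rw [hM, transpose_mul, transpose_transpose, mul_assoc, ← mul_assoc U, hU2, one_mul, hV1]
  have hM1 : Mᵀ * M = 1 := by
    rw [hM, transpose_mul, transpose_transpose, mul_assoc, ← mul_assoc V, hV2, one_mul, hU1]
  have e1 : V * diagonal x * Vᵀ * (U * diagonal y * Uᵀ)
      = V * (diagonal x * (M * (diagonal y * Mᵀ))) * Vᵀ := by
    simp only [hM, transpose_mul, transpose_transpose, Matrix.mul_assoc]
    rw [hV2, Matrix.mul_one]
  have e2 : Matrix.trace (V * (diagonal x * (M * (diagonal y * Mᵀ))) * Vᵀ)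
      = Matrix.trace (diagonal x * (M * (diagonal y * Mᵀ))) := by
    rw [Matrix.trace_mul_comm, ← Matrix.mul_assoc, hV1, Matrix.one_mul]
  have e3 : Matrix.trace (diagonal x * (M * (diagonal y * Mᵀ)))
      = ∑ i, ∑ j, x i * y j * (M i j)^2 := by
    rw [← Matrix.mul_assoc]
    simp only [Matrix.trace, Matrix.diag, Matrix.mul_apply, transpose_apply,
      Matrix.diagonal_apply, ite_mul, zero_mul, Finset.sum_ite_eq, Finset.mem_univ, if_true]
    exact Finset.sum_congr rfl fun i _ => Finset.sum_congr rfl fun j _ => by ring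
  rw [e1, e2, e3]
  -- doubly stochastic matrix of squares
  have hs : (Matrix.of fun i j => M i j ^ 2) ∈ doublyStochastic ℝ (Fin p) := by
    refine mem_doublyStochastic_iff_sum.2 ⟨fun i j => sq_nonneg _, fun i => ?_, fun j => ?_⟩
    · have := congrArg (fun A => A i i) hM2
      simpa [Matrix.mul_apply, Matrix.one_apply, sq] using this
    · have := congrArg (fun A => A j j) hM1
      simpa [Matrix.mul_apply, Matrix.one_apply, sq] using this
  obtain ⟨w, hw0, hw1, hwsum⟩ := exists_eq_sum_perm_of_mem_doublyStochastic hs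
  have hsij : ∀ i j, M i j ^ 2 = ∑ σ : Equiv.Perm (Fin p), w σ * (Equiv.Perm.permMatrix ℝ σ) i j := by
    intro i j
    have := congrArg (fun A => A i j) hwsum
    simpa [Matrix.sum_apply] using this.symm
  have mono : Monovary x y := by
    intro i j hij
    have hji : j < i := by
      by_contra hle
      push_neg at hle
      exact absurd (hy hle) (not_le.2 hij)
    exact hx hji.le
  have rearr : ∀ σ : Equiv.Perm (Fin p), ∑ i, x i * y (σ i) ≤ ∑ i, x i * y i := by
    intro σ
    have := mono.sum_smul_comp_perm_le_sum_smul (σ := σ)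
    simpa [smul_eq_mul] using this
  have swap : ∑ i, ∑ j, x i * y j * M i j ^ 2
      = ∑ σ : Equiv.Perm (Fin p), ∑ i, w σ * (x i * y (σ i)) := by
    simp_rw [hsij, Finset.mul_sum]
    calc ∑ i, ∑ j, ∑ σ : Equiv.Perm (Fin p), x i * y j * (w σ * (Equiv.Perm.permMatrix ℝ σ) i j)
        = ∑ i, ∑ σ : Equiv.Perm (Fin p), ∑ j, x i * y j * (w σ * (Equiv.Perm.permMatrix ℝ σ) i j) :=
          Finset.sum_congr rfl fun i _ => Finset.sum_comm
      _ = ∑ σ : Equiv.Perm (Fin p), ∑ i, ∑ j, x i * y j * (w σ * (Equiv.Perm.permMatrix ℝ σ) i j) :=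
          Finset.sum_comm
      _ = ∑ σ : Equiv.Perm (Fin p), ∑ i, w σ * (x i * y (σ i)) := by
          refine Finset.sum_congr rfl fun σ _ => Finset.sum_congr rfl fun i _ => ?_
          simp only [Equiv.Perm.permMatrix, PEquiv.toMatrix_apply, Equiv.toPEquiv_apply, Option.mem_def,
              Option.some.injEq, Matrix.one_apply,
            mul_ite, mul_one, mul_zero, Finset.sum_ite_eq, Finset.mem_univ, if_true]
          ring
  rw [swap]
  calc ∑ σ : Equiv.Perm (Fin p), ∑ i, w σ * (x i * y (σ i))
      = ∑ σ : Equiv.Perm (Fin p), w σ * ∑ i, x i * y (σ i) :=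
        Finset.sum_congr rfl fun σ _ => (Finset.mul_sum Finset.univ (fun i => x i * y (σ i)) (w σ)).symm
    _ ≤ ∑ σ : Equiv.Perm (Fin p), w σ * ∑ i, x i * y i := by
        exact Finset.sum_le_sum fun σ _ => mul_le_mul_of_nonneg_left (rearr σ) (hw0 σ)
    _ = ∑ r, x r * y r := by
        rw [← Finset.sum_mul, hw1, one_mul]

lemma sandwich_mul {p : ℕ} (V : Matrix (Fin p) (Fin p) ℝ) (hV : Vᵀ * V = 1)
    (L R L' R' : Matrix (Fin p) (Fin p) ℝ) (h : R * L' = 1) (c d : Fin p → ℝ) :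
    (L * (V * diagonal c * Vᵀ) * R) * (L' * (V * diagonal d * Vᵀ) * R')
      = L * (V * diagonal (fun r => c r * d r) * Vᵀ) * R' := by
  have h1 : R * (L' * (V * (diagonal d * (Vᵀ * R')))) = V * (diagonal d * (Vᵀ * R')) := by
    rw [← Matrix.mul_assoc, h, Matrix.one_mul]
  have h2 : Vᵀ * (V * (diagonal d * (Vᵀ * R'))) = diagonal d * (Vᵀ * R') := by
    rw [← Matrix.mul_assoc, hV, Matrix.one_mul]
  have h3 : diagonal c * (diagonal d * (Vᵀ * R'))
      = diagonal (fun r => c r * d r) * (Vᵀ * R') := by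
    rw [← Matrix.mul_assoc, diagonal_mul_diagonal]
  simp only [Matrix.mul_assoc, h1, h2, h3]

/-- Von Neumann trace-inequality upper bound on the variance term: if `g` lists the eigenvalues
of `G₂` (with multiplicity) in increasing order and `κ` lists the eigenvalues of
`G₂^{1/2} G₁⁻¹ G₂^{1/2}` (with multiplicity) in decreasing order, then for every `λ ≥ 0`,
`trace((G₂ + λG₁)⁻² G₂) ≤ Σ_r κ_r² / (g_r (κ_r + λ)²)` (with `M⁻² = (M⁻¹)ᵀ M⁻¹`). -/
theorem variance_term_vonNeumann_bound
    (p : ℕ) (hp : 1 ≤ p) (G₁ G₂ : Matrix (Fin p) (Fin p) ℝ)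
    (hG₁ : G₁.PosDef) (hG₂ : G₂.PosDef)
    (G₂half : Matrix (Fin p) (Fin p) ℝ) (hhalf : G₂half.PosDef)
    (hsq : G₂half * G₂half = G₂)
    (g κ : Fin p → ℝ)
    (hgmono : Monotone g)
    (hgeig : G₂.charpoly = ∏ r : Fin p, (Polynomial.X - Polynomial.C (g r)))
    (hκanti : Antitone κ)
    (hκeig : (G₂half * G₁⁻¹ * G₂half).charpoly
      = ∏ r : Fin p, (Polynomial.X - Polynomial.C (κ r))) :
    ∀ l : ℝ, 0 ≤ l →
      Matrix.trace (((G₂ + l • G₁)⁻¹)ᵀ * (G₂ + l • G₁)⁻¹ * G₂)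
        ≤ ∑ r : Fin p, κ r ^ 2 / (g r * (κ r + l) ^ 2) := by
  intro l hl
  set A := G₂half with hA
  have hAT : Aᵀ = A := by
    ext i j
    have := congrFun (congrFun hhalf.isHermitian i) j
    simpa [Matrix.conjTranspose_apply] using this
  have hAdet : IsUnit A.det := (Matrix.isUnit_iff_isUnit_det A).mp hhalf.isUnit
  have hA1 : A * A⁻¹ = 1 := Matrix.mul_nonsing_inv A hAdet
  have hA2 : A⁻¹ * A = 1 := Matrix.nonsing_inv_mul A hAdet
  have hAinvT : (A⁻¹)ᵀ = A⁻¹ := by rw [Matrix.transpose_nonsing_inv, hAT]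
  -- K := A * G₁⁻¹ * A is positive definite
  have hKpos : (A * G₁⁻¹ * A).PosDef := by
    refine Matrix.PosDef.of_dotProduct_mulVec_pos ?_ ?_
    · have h1 := Matrix.isHermitian_conjTranspose_mul_mul A (hG₁.inv).isHermitian
      rwa [hhalf.isHermitian] at h1
    · intro x hx
      have hinj := Matrix.mulVec_injective_iff_isUnit.mpr hhalf.isUnit
      have hvne : A *ᵥ x ≠ 0 := by
        intro h0
        exact hx (hinj (by simpa using h0))
      have h2 := (hG₁.inv).dotProduct_mulVec_pos hvne
      have h3 : star (A *ᵥ x) ⬝ᵥ (G₁⁻¹ *ᵥ (A *ᵥ x)) = star x ⬝ᵥ ((A * G₁⁻¹ * A) *ᵥ x) := by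
        rw [← Matrix.mulVec_mulVec, ← Matrix.mulVec_mulVec, dotProduct_mulVec (star x),
          Matrix.star_mulVec, hhalf.isHermitian]
      rwa [h3] at h2
  obtain ⟨U, hU1, hU2, hG₂dec, hgpos⟩ := spectral_of_charpoly G₂ hG₂ g hgeig
  obtain ⟨V, hV1, hV2, hKdec, hκpos⟩ := spectral_of_charpoly (A * G₁⁻¹ * A) hKpos κ hκeig
  -- G₂ in the V frame
  have hG₂V : G₂ = A * (V * diagonal (fun _ => (1:ℝ)) * Vᵀ) * A := by
    rw [diagonal_one, Matrix.mul_one, hV2, Matrix.mul_one, hsq]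
  -- G₁ decomposition
  have hG₁invdec : G₁⁻¹ = A⁻¹ * (V * diagonal κ * Vᵀ) * A⁻¹ := by
    rw [← hKdec]
    calc G₁⁻¹ = (A⁻¹ * A) * G₁⁻¹ * (A * A⁻¹) := by rw [hA2, hA1, Matrix.one_mul, Matrix.mul_one]
    _ = A⁻¹ * (A * G₁⁻¹ * A) * A⁻¹ := by simp only [Matrix.mul_assoc]
  have hG₁det : IsUnit G₁.det := (Matrix.isUnit_iff_isUnit_det G₁).mp hG₁.isUnit
  have hG₁dec : G₁ = A * (V * diagonal (fun r => (κ r)⁻¹) * Vᵀ) * A := by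
    rw [← Matrix.nonsing_inv_nonsing_inv G₁ hG₁det]
    refine Matrix.inv_eq_right_inv ?_
    rw [hG₁invdec, sandwich_mul V hV1 _ _ _ _ hA2]
    have hc : (fun r => κ r * (κ r)⁻¹) = fun _ => (1:ℝ) :=
      funext fun r => mul_inv_cancel₀ (hκpos r).ne'
    rw [hc, diagonal_one, Matrix.mul_one, hV2, Matrix.mul_one, hA2]
  -- the matrix S = G₂ + l • G₁
  set c : Fin p → ℝ := fun r => 1 + l * (κ r)⁻¹ with hcdef
  have hcpos : ∀ r, 0 < c r := by
    intro r
    have := mul_nonneg hl (inv_nonneg.2 (hκpos r).le)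
    simp only [hcdef]; linarith
  have hSdec : G₂ + l • G₁ = A * (V * diagonal c * Vᵀ) * A := by
    rw [hG₂V, hG₁dec]
    have hsmul : l • (A * (V * diagonal (fun r => (κ r)⁻¹) * Vᵀ) * A)
        = A * (V * diagonal (fun r => l * (κ r)⁻¹) * Vᵀ) * A := by
      rw [show (diagonal (fun r => l * (κ r)⁻¹) : Matrix (Fin p) (Fin p) ℝ)
          = l • diagonal (fun r => (κ r)⁻¹) from Matrix.diagonal_smul l (fun r => (κ r)⁻¹)]
      simp only [Matrix.smul_mul, Matrix.mul_smul]
    rw [hsmul, ← Matrix.add_mul, ← Matrix.mul_add, ← Matrix.add_mul, ← Matrix.mul_add,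
      diagonal_add]
  set b : Fin p → ℝ := fun r => (c r)⁻¹ with hbdef
  set E : Matrix (Fin p) (Fin p) ℝ := A⁻¹ * (V * diagonal b * Vᵀ) * A⁻¹ with hE
  have hSinv : (G₂ + l • G₁)⁻¹ = E := by
    refine Matrix.inv_eq_right_inv ?_
    rw [hSdec, hE, sandwich_mul V hV1 _ _ _ _ hA1]
    have hcb : (fun r => c r * b r) = fun _ => (1:ℝ) :=
      funext fun r => mul_inv_cancel₀ (hcpos r).ne'
    rw [hcb, diagonal_one, Matrix.mul_one, hV2, Matrix.mul_one, hA1]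
  have hET : Eᵀ = E := by
    rw [hE]
    simp only [Matrix.transpose_mul, Matrix.transpose_transpose, Matrix.diagonal_transpose,
      hAinvT, Matrix.mul_assoc]
  rw [hSinv, hET]
  -- trace manipulation
  have hEG₂ : E * G₂ = A⁻¹ * (V * diagonal (fun r => b r * 1) * Vᵀ) * A := by
    rw [hG₂V, hE, sandwich_mul V hV1 _ _ _ _ hA2]
  have hEGE : (E * G₂) * E
      = A⁻¹ * (V * diagonal (fun r => (b r * 1) * b r) * Vᵀ) * A⁻¹ := by
    rw [hEG₂, hE, sandwich_mul V hV1 _ _ _ _ hA1]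
  have hG₂invdec : A⁻¹ * A⁻¹ = U * diagonal (fun r => (g r)⁻¹) * Uᵀ := by
    have h1 : A⁻¹ * A⁻¹ = G₂⁻¹ := by rw [← hsq, Matrix.mul_inv_rev]
    rw [h1]
    refine Matrix.inv_eq_right_inv ?_
    rw [hG₂dec]
    have h2 := sandwich_mul U hU1 1 1 1 1 (Matrix.one_mul 1) g (fun r => (g r)⁻¹)
    simp only [Matrix.one_mul, Matrix.mul_one] at h2
    rw [h2]
    have hg1 : (fun r => g r * (g r)⁻¹) = fun _ => (1:ℝ) :=
      funext fun r => mul_inv_cancel₀ (hgpos r).ne'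
    rw [hg1, diagonal_one, Matrix.mul_one, hU2]
  have htr : Matrix.trace (E * E * G₂)
      = Matrix.trace ((V * diagonal (fun r => (b r * 1) * b r) * Vᵀ)
          * (U * diagonal (fun r => (g r)⁻¹) * Uᵀ)) := by
    rw [Matrix.mul_assoc, Matrix.trace_mul_comm, hEGE, Matrix.trace_mul_comm,
      ← Matrix.mul_assoc, hG₂invdec, Matrix.trace_mul_comm]
  rw [htr]
  -- antitonicity
  have hbpos : ∀ r, 0 < b r := fun r => inv_pos.2 (hcpos r)
  have hbanti : Antitone b := by
    intro r s hrs
    refine inv_anti₀ (hcpos r) ?_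
    simp only [hcdef]
    have h1 : (κ r)⁻¹ ≤ (κ s)⁻¹ := inv_anti₀ (hκpos s) (hκanti hrs)
    nlinarith
  have hx : Antitone (fun r => (b r * 1) * b r) := by
    intro r s hrs
    simp only [mul_one]
    exact mul_le_mul (hbanti hrs) (hbanti hrs) (hbpos s).le (hbpos r).le
  have hy : Antitone (fun r => (g r)⁻¹) := fun r s hrs =>
    inv_anti₀ (hgpos r) (hgmono hrs)
  refine le_trans (vonNeumann_trace_le _ _ hx hy V U hV1 hV2 hU1 hU2) ?_
  refine le_of_eq (Finset.sum_congr rfl fun r _ => ?_)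
  have h1 : κ r ≠ 0 := (hκpos r).ne'
  have h2 : g r ≠ 0 := (hgpos r).ne'
  have h3 : κ r + l ≠ 0 := (by nlinarith [hκpos r] : (0:ℝ) < κ r + l).ne'
  simp only [hbdef, hcdef, mul_one]
  field_simp
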